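/- Suppose a rational function f ∈ k̄(t) together with nonzero elements α₁, …, α_s ∈ k̄ and rational functions μ₁, …, μ_s ∈ 𝔽_q(t) (viewed inside k̄(t) via the inclusion 𝔽_q ⊆ k̄) satisfies the σ-difference equation (t − θ)·f^{(-1)} − f = Σ_{i=1}^{s} μ_i · α_i^{(-1)} · (t − θ). Then the twisted rational function f^{(-1)} is regular at t = θ. -/

import Mathlib

open Polynomial

noncomputable def RatFunc.coeffMap {K L : Type*} [Field K] [Field L] (c : K →+* L) :
    RatFunc K →+* RatFunc L :=
  RatFunc.mapRingHom (Polynomial.mapRingHom c)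
    (nonZeroDivisors_le_comap_nonZeroDivisors_of_injective _
      (Polynomial.map_injective _ c.injective))

namespace CarlitzAux

variable {K L : Type*} [Field K] [Field L]

/-- `x` is regular at `b`: it has a representation `P/Q` with `Q b ≠ 0`. -/
def Reg (x : RatFunc K) (b : K) : Prop :=
  ∃ P Q : K[X], Q.eval b ≠ 0 ∧ x = algebraMap K[X] (RatFunc K) P / algebraMap K[X] (RatFunc K) Q

theorem reg_of_denom {x : RatFunc K} {b : K} (h : x.denom.eval b ≠ 0) : Reg x b :=
  ⟨x.num, x.denom, h, x.num_div_denom.symm⟩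

theorem denom_of_reg {x : RatFunc K} {b : K} (h : Reg x b) : x.denom.eval b ≠ 0 := by
  obtain ⟨P, Q, hQ, rfl⟩ := h
  have hQ0 : Q ≠ 0 := fun h0 => hQ (by simp [h0])
  obtain ⟨B, hB⟩ := (RatFunc.denom_dvd hQ0).mpr ⟨P, rfl⟩
  intro h0
  exact hQ (by rw [hB, eval_mul, h0, zero_mul])

theorem Reg.add {x y : RatFunc K} {b : K} (hx : Reg x b) (hy : Reg y b) : Reg (x + y) b := by
  obtain ⟨P1, Q1, h1, rfl⟩ := hx
  obtain ⟨P2, Q2, h2, rfl⟩ := hy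
  have n1 : (algebraMap K[X] (RatFunc K)) Q1 ≠ 0 :=
    RatFunc.algebraMap_ne_zero (fun h0 => h1 (by simp [h0]))
  have n2 : (algebraMap K[X] (RatFunc K)) Q2 ≠ 0 :=
    RatFunc.algebraMap_ne_zero (fun h0 => h2 (by simp [h0]))
  refine ⟨P1 * Q2 + Q1 * P2, Q1 * Q2, by simp [h1, h2], ?_⟩
  rw [div_add_div _ _ n1 n2, map_add, map_mul, map_mul, map_mul]

theorem Reg.mul {x y : RatFunc K} {b : K} (hx : Reg x b) (hy : Reg y b) : Reg (x * y) b := by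
  obtain ⟨P1, Q1, h1, rfl⟩ := hx
  obtain ⟨P2, Q2, h2, rfl⟩ := hy
  refine ⟨P1 * P2, Q1 * Q2, by simp [h1, h2], ?_⟩
  rw [div_mul_div_comm, map_mul, map_mul]

theorem Reg.neg {x : RatFunc K} {b : K} (hx : Reg x b) : Reg (-x) b := by
  obtain ⟨P, Q, h1, rfl⟩ := hx
  exact ⟨-P, Q, h1, by rw [map_neg, neg_div]⟩

theorem Reg.sub {x y : RatFunc K} {b : K} (hx : Reg x b) (hy : Reg y b) : Reg (x - y) b := by
  rw [sub_eq_add_neg]; exact hx.add hy.neg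

theorem Reg.poly (P : K[X]) (b : K) : Reg (algebraMap K[X] (RatFunc K) P) b :=
  ⟨P, 1, by simp, by simp⟩

theorem Reg.X (b : K) : Reg (RatFunc.X : RatFunc K) b := by
  rw [← RatFunc.algebraMap_X]; exact Reg.poly _ _

theorem Reg.C (a b : K) : Reg (RatFunc.C a) b := by
  rw [← RatFunc.algebraMap_C]; exact Reg.poly _ _

theorem Reg.sum {ι : Type*} (s : Finset ι) (F : ι → RatFunc K) (b : K)
    (h : ∀ i ∈ s, Reg (F i) b) : Reg (∑ i ∈ s, F i) b := by
  classical
  induction s using Finset.induction with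
  | empty => simpa using Reg.poly 0 b
  | insert _ _ hni ih =>
    rw [Finset.sum_insert hni]
    exact (h _ (Finset.mem_insert_self _ _)).add
      (ih fun i hi => h i (Finset.mem_insert_of_mem hi))

theorem coeffMap_div (c : K →+* L) (P Q : K[X]) :
    RatFunc.coeffMap c (algebraMap K[X] (RatFunc K) P / algebraMap K[X] (RatFunc K) Q) =
      algebraMap L[X] (RatFunc L) (P.map c) / algebraMap L[X] (RatFunc L) (Q.map c) := by
  unfold RatFunc.coeffMap
  rw [RatFunc.coe_mapRingHom_eq_coe_map, RatFunc.map_apply_div]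
  simp

theorem Reg.coeffMap (c : K →+* L) {x : RatFunc K} {b : K} (h : Reg x b) :
    Reg (RatFunc.coeffMap c x) (c b) := by
  obtain ⟨P, Q, hQ, rfl⟩ := h
  refine ⟨P.map c, Q.map c, ?_, coeffMap_div c P Q⟩
  rw [eval_map, eval₂_at_apply]
  exact fun h0 => hQ (by simpa using h0)

theorem coeffMap_coeffMap (e : K ≃+* K) (x : RatFunc K) :
    RatFunc.coeffMap (e.symm : K →+* K) (RatFunc.coeffMap (e : K →+* K) x) = x := by
  conv_lhs => rw [← x.num_div_denom]
  rw [coeffMap_div, coeffMap_div, Polynomial.map_map, Polynomial.map_map]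
  have : ((e.symm : K →+* K).comp (e : K →+* K)) = RingHom.id K :=
    RingHom.ext fun a => e.symm_apply_apply a
  rw [this, Polynomial.map_id, Polynomial.map_id, x.num_div_denom]

end CarlitzAux

open CarlitzAux

/-- If `f ∈ k̄(t)`, nonzero `α₁, …, α_s ∈ k̄` and `μ₁, …, μ_s ∈ 𝔽_q(t)` satisfy
`(t − θ)·f⁽⁻¹⁾ − f = ∑ μᵢ·αᵢ⁽⁻¹⁾·(t − θ)`, then the twisted rational function `f⁽⁻¹⁾` is regular at `t = θ`. -/
theorem carlitz_twisted_f_regular_at_theta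
    -- `q = p ^ m` is a prime power and `𝔽_q` is the field with `q` elements
    (p m q : ℕ) [Fact p.Prime] (hm : 0 < m) (hq : q = p ^ m)
    (Fq : Type*) [Field Fq] [Fintype Fq] [CharP Fq p] (hcard : Fintype.card Fq = q)
    -- `k̄` is an algebraic closure of `k = 𝔽_q(θ)`, and `θ` is the image of the variable
    (kbar : Type*) [Field kbar] [CharP kbar p] [PerfectRing kbar p]
    [Algebra (RatFunc Fq) kbar] [IsAlgClosure (RatFunc Fq) kbar]
    (θ : kbar) (hθ : θ = algebraMap (RatFunc Fq) kbar RatFunc.X)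
    -- `ψ : a ↦ a^{1/q}` is the inverse of the `q`-power Frobenius of `k̄`
    (ψ : kbar ≃+* kbar) (hψ : ψ = (iterateFrobeniusEquiv kbar p m).symm)
    -- the data `f`, `αᵢ`, `μᵢ`
    (s : ℕ) (α : Fin s → kbar) (hα : ∀ i, α i ≠ 0) (μ : Fin s → RatFunc Fq)
    (f : RatFunc kbar)
    -- the σ-difference equation `(t − θ)·f⁽⁻¹⁾ − f = ∑ μᵢ·αᵢ⁽⁻¹⁾·(t − θ)`
    (heq : (RatFunc.X - RatFunc.C θ) * RatFunc.coeffMap (ψ : kbar →+* kbar) f - f =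
      ∑ i, RatFunc.coeffMap
          ((algebraMap (RatFunc Fq) kbar).comp (algebraMap Fq (RatFunc Fq))) (μ i) *
        RatFunc.C (ψ (α i)) * (RatFunc.X - RatFunc.C θ)) :
    -- `f⁽⁻¹⁾` is regular at `t = θ`:
    -- the denominator of `f⁽⁻¹⁾` in lowest terms does not vanish at `θ`
    Polynomial.eval θ (RatFunc.coeffMap (ψ : kbar →+* kbar) f).denom ≠ 0 := by
  intro h0
  set A : RatFunc Fq →+* kbar := (algebraMap (RatFunc Fq) kbar) with hA
  set ι : Fq →+* kbar := A.comp (algebraMap Fq (RatFunc Fq)) with hι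
  set G : RatFunc kbar := RatFunc.coeffMap (ψ : kbar →+* kbar) f with hGdef
  have hq2 : 2 ≤ q := by
    rw [hq]
    calc 2 ≤ p := (Fact.out : p.Prime).two_le
    _ = p ^ 1 := (pow_one p).symm
    _ ≤ p ^ m := Nat.pow_le_pow_right (Nat.le_of_lt (Fact.out : p.Prime).one_lt) hm
  -- recovery of f from G
  have hf : f = RatFunc.coeffMap (ψ.symm : kbar →+* kbar) G := (coeffMap_coeffMap ψ f).symm
  -- q-power Frobenius
  have hφ : ∀ x : kbar, ψ.symm x = x ^ q := by
    intro x
    rw [hψ, RingEquiv.symm_symm, hq]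
    exact iterateFrobenius_def p m x
  -- transcendence of θ over Fq
  have htrans : ∀ E : Polynomial Fq, E ≠ 0 → Polynomial.eval₂ ι θ E ≠ 0 := by
    intro E hE
    have h1 : Polynomial.eval₂ ι θ E
        = A (Polynomial.eval₂ (algebraMap Fq (RatFunc Fq)) RatFunc.X E) := by
      rw [hθ, hι]
      exact (Polynomial.hom_eval₂ E (algebraMap Fq (RatFunc Fq)) A RatFunc.X).symm
    have h2 : Polynomial.eval₂ (algebraMap Fq (RatFunc Fq)) RatFunc.X E
        = algebraMap (Polynomial Fq) (RatFunc Fq) E := by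
      rw [IsScalarTower.algebraMap_eq Fq (Polynomial Fq) (RatFunc Fq), ← RatFunc.algebraMap_X,
        ← Polynomial.hom_eval₂, Polynomial.algebraMap_eq, Polynomial.eval₂_C_X]
    rw [h1, h2]
    exact fun hc => RatFunc.algebraMap_ne_zero hE (A.injective (by simpa using hc))
  -- transcendence of powers of θ
  have htransn : ∀ n : ℕ, 0 < n → ∀ E : Polynomial Fq, E ≠ 0 →
      Polynomial.eval₂ ι (θ ^ n) E ≠ 0 := by
    intro n hn E hE
    have hcomp : Polynomial.eval₂ ι θ (E.comp (Polynomial.X ^ n))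
        = Polynomial.eval₂ ι (θ ^ n) E := by
      rw [Polynomial.eval₂_comp]
      simp
    rw [← hcomp]
    apply htrans
    rw [Ne, Polynomial.comp_eq_zero_iff]
    rintro (rfl | ⟨-, hX⟩)
    · exact hE rfl
    · have h1 := congrArg Polynomial.natDegree hX
      rw [Polynomial.natDegree_X_pow, Polynomial.natDegree_C] at h1
      omega
  -- the sequence of points θ^(q^j)
  set b : ℕ → kbar := fun j => θ ^ (q ^ j) with hb
  have hb0 : b 0 = θ := by simp [hb]
  have hbs : ∀ j, ψ.symm (b j) = b (j + 1) := by
    intro j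
    rw [hφ, hb]
    simp only [← pow_mul, ← pow_succ]
  -- distinctness of the points
  have hbinj : Function.Injective b := by
    have hmono : StrictMono (fun j : ℕ => q ^ j) := fun i j hij =>
      Nat.pow_lt_pow_right (by omega) hij
    intro i j hij
    by_contra hne
    wlog hlt : i < j generalizing i j
    · exact this hij.symm (Ne.symm hne) (by omega)
    have hE : (Polynomial.X ^ (q ^ j) - Polynomial.X ^ (q ^ i) : Polynomial Fq) ≠ 0 := by
      rw [sub_ne_zero]
      intro hXX
      have := congrArg Polynomial.natDegree hXX
      rw [Polynomial.natDegree_X_pow, Polynomial.natDegree_X_pow] at this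
      exact absurd this (Nat.ne_of_gt (hmono hlt))
    apply htrans _ hE
    simp only [Polynomial.eval₂_sub, Polynomial.eval₂_X_pow]
    rw [show θ ^ q ^ j = b j from rfl, show θ ^ q ^ i = b i from rfl, hij, sub_self]
  -- the right-hand side is regular at each b (j+1)
  have hR : ∀ j : ℕ, Reg (∑ i, RatFunc.coeffMap ι (μ i) *
      RatFunc.C (ψ (α i)) * (RatFunc.X - RatFunc.C θ)) (b (j + 1)) := by
    intro j
    apply Reg.sum
    intro i _
    refine (Reg.mul ?_ (Reg.C _ _)).mul ((Reg.X _).sub (Reg.C _ _))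
    refine ⟨(μ i).num.map ι, (μ i).denom.map ι, ?_, ?_⟩
    · rw [Polynomial.eval_map]
      exact htransn _ (Nat.pow_pos (by omega)) _ (RatFunc.denom_ne_zero _)
    · conv_lhs => rw [← (μ i).num_div_denom]
      exact coeffMap_div ι (μ i).num (μ i).denom
  -- rearrange the equation
  have hfe : f = (RatFunc.X - RatFunc.C θ) * G -
      ∑ i, RatFunc.coeffMap ι (μ i) * RatFunc.C (ψ (α i)) * (RatFunc.X - RatFunc.C θ) := by
    rw [← heq]; ring
  -- pole propagation: G has a pole at every b j
  have key : ∀ j, ¬ Reg G (b j) := by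
    intro j
    induction j with
    | zero => exact fun h => denom_of_reg h (by rw [hb0]; exact h0)
    | succ j ih =>
      intro hreg
      apply ih
      have hfreg : Reg f (b (j + 1)) := by
        rw [hfe]
        exact (((Reg.X _).sub (Reg.C _ _)).mul hreg).sub (hR j)
      have hthis := hfreg.coeffMap (ψ : kbar →+* kbar)
      rw [← hGdef] at hthis
      have hψb : ψ (b (j + 1)) = b j := by
        rw [← hbs j, RingEquiv.apply_symm_apply]
      have hthis' : Reg G (ψ (b (j + 1))) := hthis
      rwa [hψb] at hthis'
  -- contradiction: infinitely many roots of the denominator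
  have hroots : ∀ j, b j ∈ {x | Polynomial.IsRoot G.denom x} := by
    intro j
    by_contra hc
    exact key j (reg_of_denom hc)
  exact Set.infinite_of_injective_forall_mem hbinj hroots
    (Polynomial.finite_setOf_isRoot (RatFunc.denom_ne_zero G))
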